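/- The function g : ℝ^d → ℝ defined by g(x) = min(1, |x|)^{s+α} is α-Hölder continuous on ℝ^d with α-Hölder seminorm at most (s+α)/α. -/

import Mathlib

open Real
open scoped NNReal

/-- Subadditivity of rpow for exponent `≤ 1`, real version. -/
lemma real_rpow_add_le {p u v : ℝ} (hu : 0 ≤ u) (hv : 0 ≤ v) (hp : 0 ≤ p) (hp1 : p ≤ 1) :
    (u + v) ^ p ≤ u ^ p + v ^ p := by
  have h := NNReal.rpow_add_le_add_rpow (⟨u, hu⟩ : ℝ≥0) (⟨v, hv⟩ : ℝ≥0) hp hp1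
  have h' := NNReal.coe_le_coe.mpr h
  exact h'

/-- Key one-dimensional estimate on `[0,1]`. -/
lemma key1d (s α : ℝ) (hs : 0 < s) (hα0 : 0 < α) (hα1 : α ≤ 1) {a b : ℝ}
    (hb : 0 ≤ b) (hba : b ≤ a) (ha1 : a ≤ 1) :
    a ^ (s + α) - b ^ (s + α) ≤ ((s + α) / α) * (a - b) ^ α := by
  set p := s + α with hp
  have hp0 : 0 < p := by positivity
  have hαp : α ≤ p := by linarith
  have hab0 : 0 ≤ a - b := by linarith
  have hab1 : a - b ≤ 1 := by linarith
  have ha0 : 0 ≤ a := hb.trans hba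
  have hcoef : (1 : ℝ) ≤ p / α := by
    rw [le_div_iff₀ hα0]; linarith
  have hpow_mono : (a - b) ^ p ≤ (a - b) ^ α :=
    Real.rpow_le_rpow_of_exponent_ge' hab0 hab1 hα0.le hαp
  rcases le_or_gt p 1 with hple | hpgt
  · -- p ≤ 1 : subadditivity
    have hsub : a ^ p ≤ (a - b) ^ p + b ^ p := by
      have := real_rpow_add_le hab0 hb hp0.le hple
      simpa [sub_add_cancel] using this
    calc a ^ p - b ^ p ≤ (a - b) ^ p := by linarith
      _ ≤ (a - b) ^ α := hpow_mono
      _ ≤ (p / α) * (a - b) ^ α := by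
          nth_rewrite 1 [← one_mul ((a - b) ^ α)]
          exact mul_le_mul_of_nonneg_right hcoef (by positivity)
  · -- p ≥ 1 : Bernoulli-type convexity bound
    have hmain : a ^ p - b ^ p ≤ p * (a - b) := by
      rcases eq_or_lt_of_le ha0 with h0 | hapos
      · have hb0 : b = 0 := le_antisymm (hba.trans h0.symm.le) hb
        simp [← h0, hb0, Real.zero_rpow hp0.ne']
      · have hx : -1 ≤ b / a - 1 := by
          have : 0 ≤ b / a := div_nonneg hb ha0
          linarith
        have hbern := one_add_mul_self_le_rpow_one_add hx hpgt.le
        have h1 : (1 : ℝ) + (b / a - 1) = b / a := by ring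
        rw [h1] at hbern
        -- hbern : 1 + p * (b/a - 1) ≤ (b/a)^p
        have hdiv : (b / a) ^ p = b ^ p / a ^ p := Real.div_rpow hb ha0 p
        rw [hdiv] at hbern
        have hap : (0:ℝ) < a ^ p := Real.rpow_pos_of_pos hapos p
        have := mul_le_mul_of_nonneg_right hbern hap.le
        rw [div_mul_cancel₀ _ hap.ne'] at this
        -- this : (1 + p*(b/a - 1)) * a^p ≤ b^p
        have hap1 : a ^ p ≤ a := by
          calc a ^ p ≤ a ^ (1:ℝ) :=
                Real.rpow_le_rpow_of_exponent_ge hapos ha1 hpgt.le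
            _ = a := Real.rpow_one a
        have hmul : a ^ p - b ^ p ≤ p * (1 - b / a) * a ^ p := by nlinarith
        have h2 : p * (1 - b / a) * a ^ p ≤ p * (1 - b / a) * a := by
          apply mul_le_mul_of_nonneg_left hap1
          have hba' : b / a ≤ 1 := (div_le_one hapos).mpr hba
          have : 0 ≤ 1 - b / a := by linarith
          positivity
        have h3 : p * (1 - b / a) * a = p * (a - b) := by
          field_simp
        exact (hmul.trans h2).trans (le_of_eq h3)
    calc a ^ p - b ^ p ≤ p * (a - b) := hmain
      _ ≤ p * (a - b) ^ α := by
          apply mul_le_mul_of_nonneg_left _ hp0.le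
          calc a - b = (a - b) ^ (1:ℝ) := (Real.rpow_one _).symm
            _ ≤ (a - b) ^ α := Real.rpow_le_rpow_of_exponent_ge' hab0 hab1 hα0.le hα1
      _ ≤ (p / α) * (a - b) ^ α := by
          apply mul_le_mul_of_nonneg_right _ (by positivity)
          rw [le_div_iff₀ hα0]; nlinarith

/-- The estimate for `f(t) = min(1,t)^p` on `[0,∞)`, ordered version. -/
lemma key_min (s α : ℝ) (hs : 0 < s) (hα0 : 0 < α) (hα1 : α ≤ 1) {a b : ℝ}
    (hb : 0 ≤ b) (hba : b ≤ a) :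
    min 1 a ^ (s + α) - min 1 b ^ (s + α) ≤ ((s + α) / α) * (a - b) ^ α := by
  set A := min 1 a with hA
  set B := min 1 b with hB
  have hB0 : 0 ≤ B := le_min zero_le_one hb
  have hBA : B ≤ A := min_le_min le_rfl hba
  have hA1 : A ≤ 1 := min_le_left _ _
  have h1 : A - B ≤ a - b := by
    rcases le_total (1:ℝ) a with h | h <;> rcases le_total (1:ℝ) b with h' | h' <;>
      simp [hA, hB, min_eq_left, min_eq_right, h, h'] <;> linarith
  calc A ^ (s + α) - B ^ (s + α) ≤ ((s + α) / α) * (A - B) ^ α :=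
        key1d s α hs hα0 hα1 hB0 hBA hA1
    _ ≤ ((s + α) / α) * (a - b) ^ α := by
        apply mul_le_mul_of_nonneg_left _ (by positivity)
        exact Real.rpow_le_rpow (by linarith) h1 hα0.le

/-- The function `g(x) = min(1,|x|)^{s+α}` is `α`-Hölder continuous on `ℝ^d`
with `α`-Hölder seminorm at most `(s+α)/α`. -/
theorem stmt3 (d : ℕ) (hd : 2 ≤ d) (s α : ℝ) (hs : 0 < s) (hα0 : 0 < α) (hα1 : α ≤ 1) :
    ∀ x y : EuclideanSpace ℝ (Fin d),
      |min 1 ‖x‖ ^ (s + α) - min 1 ‖y‖ ^ (s + α)| ≤ ((s + α) / α) * ‖x - y‖ ^ α := by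
  have main : ∀ x y : EuclideanSpace ℝ (Fin d), ‖y‖ ≤ ‖x‖ →
      min 1 ‖x‖ ^ (s + α) - min 1 ‖y‖ ^ (s + α) ≤ ((s + α) / α) * ‖x - y‖ ^ α := by
    intro x y hxy
    have h1 : ‖x‖ - ‖y‖ ≤ ‖x - y‖ := by
      have := norm_sub_norm_le x y
      linarith
    calc min 1 ‖x‖ ^ (s + α) - min 1 ‖y‖ ^ (s + α)
        ≤ ((s + α) / α) * (‖x‖ - ‖y‖) ^ α := key_min s α hs hα0 hα1 (norm_nonneg y) hxy
      _ ≤ ((s + α) / α) * ‖x - y‖ ^ α := by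
          apply mul_le_mul_of_nonneg_left _ (by positivity)
          exact Real.rpow_le_rpow (by linarith) h1 hα0.le
  intro x y
  rcases le_total ‖y‖ ‖x‖ with h | h
  · rw [abs_of_nonneg]
    · exact main x y h
    · have : min 1 ‖y‖ ^ (s + α) ≤ min 1 ‖x‖ ^ (s + α) :=
        Real.rpow_le_rpow (le_min zero_le_one (norm_nonneg y)) (min_le_min le_rfl h)
          (by positivity)
      linarith
  · rw [abs_sub_comm, abs_of_nonneg]
    · have := main y x h
      rwa [norm_sub_rev] at this
    · have : min 1 ‖x‖ ^ (s + α) ≤ min 1 ‖y‖ ^ (s + α) :=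
        Real.rpow_le_rpow (le_min zero_le_one (norm_nonneg x)) (min_le_min le_rfl h)
          (by positivity)
      linarith
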